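/- Stability of the root bound under growth: let f g : X → X on a finite type with ≤f and ≤g antisymmetric, such that ∀ n m, n ≤f m → n ≤g m and roots g ⊆ roots f. Then for all x and rx, if rx ≤f root f x and x ≤f rx, then rx ≤g root g x and x ≤g rx. -/
import Mathlib


def lef {X : Type*} (f : X → X) (n m : X) : Prop :=
  Relation.ReflTransGen (fun a b => b = f a) n m

def roots {X : Type*} (f : X → X) : Set X := {n | f n = n}

lemma lef_fixed {X : Type*} {f : X → X} {r m : X} (h : f r = r) (hm : lef f r m) : m = r := by
  induction hm with
  | refl => rfl
  | tail _ hbc ih => subst hbc; rw [ih, h]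

lemma lef_total {X : Type*} {f : X → X} {n a b : X} (h1 : lef f n a) (h2 : lef f n b) :
    lef f a b ∨ lef f b a := by
  induction h2 with
  | refl => exact Or.inr h1
  | tail _ hbc ih =>
    rename_i c d hnc
    subst hbc
    rcases ih with h | h
    · exact Or.inl (h.tail rfl)
    · rcases h.cases_head with rfl | ⟨e, he, hea⟩
      · exact Or.inl (Relation.ReflTransGen.single rfl)
      · subst he; exact Or.inr hea

theorem stmt_17 {X : Type*} [Fintype X] (f g : X → X)
    (antisymf : ∀ n m : X, lef f n m → lef f m n → n = m)
    (antisymg : ∀ n m : X, lef g n m → lef g m n → n = m)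
    (mono : ∀ n m : X, lef f n m → lef g n m)
    (hroots : roots g ⊆ roots f)
    (rootf rootg : X → X)
    (hrootf : ∀ x, lef f x (rootf x) ∧ f (rootf x) = rootf x)
    (hrootg : ∀ x, lef g x (rootg x) ∧ g (rootg x) = rootg x) :
    ∀ x rx : X, lef f rx (rootf x) → lef f x rx →
      lef g rx (rootg x) ∧ lef g x rx := by
  intro x rx _ h2
  have hg2 : lef g x rx := mono x rx h2
  refine ⟨?_, hg2⟩
  rcases lef_total hg2 (hrootg x).1 with h | h
  · exact h
  · rw [lef_fixed (hrootg x).2 h]; exact Relation.ReflTransGen.refl
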